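/- Let R = k[X,Y,Z]/(XZ, YZ) over k = ℤ/(p) with p prime. Then for every e ∈ ℕ, dim_k R/(X^{p^e}, Y^{p^e}, Z^{p^e}) = p^{2e} + p^e - 1. -/

import Mathlib

open MvPolynomial

noncomputable section

-- generic basis-of-quotient-by-monomial-ideal lemma
theorem quot_monomial_basis {σ k : Type*} [Field k] (S : Set (σ →₀ ℕ))
    {ι : Type*} (φ : ι → (σ →₀ ℕ)) (hinj : Function.Injective φ)
    (hstd : ∀ i, ∀ s ∈ S, ¬ s ≤ φ i)
    (hcover : ∀ m : σ →₀ ℕ, (∃ s ∈ S, s ≤ m) ∨ ∃ i, φ i = m) :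
    Nonempty (Module.Basis ι k
      (MvPolynomial σ k ⧸ Ideal.span ((fun s => monomial s (1 : k)) '' S))) := by
  classical
  set I : Ideal (MvPolynomial σ k) := Ideal.span ((fun s => monomial s (1 : k)) '' S) with hI
  set mk : MvPolynomial σ k →ₐ[k] _ := Ideal.Quotient.mkₐ k I with hmk
  set b : ι → (MvPolynomial σ k ⧸ I) := fun i => mk (monomial (φ i) 1) with hb
  have hli : LinearIndependent k b := by
    rw [linearIndependent_iff']
    intro t g h i hi
    set f : MvPolynomial σ k := ∑ j ∈ t, monomial (φ j) (g j) with hf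
    have hmkf : mk f = 0 := by
      rw [hf, map_sum, ← h]
      refine Finset.sum_congr rfl fun j hj => ?_
      rw [hb]
      rw [← map_smul, smul_monomial, smul_eq_mul, mul_one]
    have hfI : f ∈ I := by rwa [← Ideal.Quotient.eq_zero_iff_mem]
    by_contra hg
    have hcoeff : f.coeff (φ i) = g i := by
      rw [hf, coeff_sum]
      rw [Finset.sum_eq_single i]
      · rw [coeff_monomial, if_pos rfl]
      · intro j hj hne
        rw [coeff_monomial, if_neg (fun hEq => hne (hinj hEq))]
      · intro h'; exact absurd hi h'
    have hsupp : φ i ∈ f.support := by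
      rw [mem_support_iff, hcoeff]; exact hg
    obtain ⟨s, hs, hle⟩ := mem_ideal_span_monomial_image.mp hfI (φ i) hsupp
    exact hstd i s hs hle
  have hspan : ⊤ ≤ Submodule.span k (Set.range b) := by
    rintro x -
    obtain ⟨f, rfl⟩ := Ideal.Quotient.mkₐ_surjective k I x
    induction f using MvPolynomial.induction_on' with
    | monomial u a =>
      have : (monomial u a : MvPolynomial σ k) = a • monomial u 1 := by
        rw [smul_monomial, smul_eq_mul, mul_one]
      rw [show (Ideal.Quotient.mkₐ k I) (monomial u a) = a • mk (monomial u 1) by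
        rw [this, map_smul]]
      rcases hcover u with ⟨s, hs, hle⟩ | ⟨i, rfl⟩
      · have : (monomial u (1:k)) ∈ I := by
          rw [hI, mem_ideal_span_monomial_image]
          intro xi hxi
          rw [support_monomial, if_neg one_ne_zero] at hxi
          simp only [Finset.mem_singleton] at hxi
          exact ⟨s, hs, hxi ▸ hle⟩
        rw [show mk (monomial u (1:k)) = 0 from Ideal.Quotient.eq_zero_iff_mem.mpr this,
          smul_zero]
        exact Submodule.zero_mem _
      · exact Submodule.smul_mem _ _ (Submodule.subset_span ⟨i, rfl⟩)
    | add f g hfa hga =>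
      rw [map_add]
      exact Submodule.add_mem _ hfa hga
  exact ⟨Module.Basis.mk hli hspan⟩

/-- The defining ideal of `R = k[X,Y,Z]/(XZ, YZ)`. -/
def rel1 (p : ℕ) : Ideal (MvPolynomial (Fin 3) (ZMod p)) :=
  Ideal.span {X 0 * X 2, X 1 * X 2}

/-- For `R = k[X,Y,Z]/(XZ, YZ)` over `k = ℤ/(p)`, `p` prime, and every `e`,
`dim_k R/(X^{p^e}, Y^{p^e}, Z^{p^e}) = p^{2e} + p^e - 1`. -/
theorem stmt1 (p : ℕ) [Fact p.Prime] (e : ℕ) :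
    Module.finrank (ZMod p)
        ((MvPolynomial (Fin 3) (ZMod p) ⧸ rel1 p) ⧸
          Ideal.span {Ideal.Quotient.mk (rel1 p) (X 0) ^ p ^ e,
            Ideal.Quotient.mk (rel1 p) (X 1) ^ p ^ e,
            Ideal.Quotient.mk (rel1 p) (X 2) ^ p ^ e}) =
      p ^ (2 * e) + p ^ e - 1 := by
  classical
  set q := p ^ e with hqdef
  have hq : 0 < q := pow_pos (Nat.Prime.pos Fact.out) e
  set J₀ : Ideal (MvPolynomial (Fin 3) (ZMod p)) :=
    Ideal.span {X 0 ^ q, X 1 ^ q, X 2 ^ q} with hJ₀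
  have h1 : Ideal.span {Ideal.Quotient.mk (rel1 p) (X 0) ^ q,
      Ideal.Quotient.mk (rel1 p) (X 1) ^ q, Ideal.Quotient.mk (rel1 p) (X 2) ^ q}
      = J₀.map (Ideal.Quotient.mkₐ (ZMod p) (rel1 p)) := by
    rw [hJ₀, Ideal.map_span]
    congr 1
    simp [Set.image_insert_eq, Ideal.Quotient.mkₐ_eq_mk, map_pow]
  rw [h1, (DoubleQuot.quotQuotEquivQuotSupₐ (ZMod p) (rel1 p) J₀).toLinearEquiv.finrank_eq]
  set S : Set (Fin 3 →₀ ℕ) := {Finsupp.single 0 1 + Finsupp.single 2 1,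
    Finsupp.single 1 1 + Finsupp.single 2 1,
    Finsupp.single 0 q, Finsupp.single 1 q, Finsupp.single 2 q} with hS
  have h2 : rel1 p ⊔ J₀ = Ideal.span ((fun s => monomial s (1 : ZMod p)) '' S) := by
    rw [rel1, hJ₀, ← Ideal.span_union]
    congr 1
    rw [hS]
    simp only [Set.image_insert_eq, Set.image_singleton, X_pow_eq_monomial]
    rw [show (X 0 * X 2 : MvPolynomial (Fin 3) (ZMod p)) =
        monomial (Finsupp.single 0 1 + Finsupp.single 2 1) 1 by
        rw [X, X, monomial_mul, one_mul],
      show (X 1 * X 2 : MvPolynomial (Fin 3) (ZMod p)) =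
        monomial (Finsupp.single 1 1 + Finsupp.single 2 1) 1 by
        rw [X, X, monomial_mul, one_mul]]
    ext f
    simp only [Set.insert_union, Set.singleton_union, Set.mem_insert_iff,
      Set.mem_singleton_iff]
    try tauto
  rw [h2]
  set φ : (Fin q × Fin q) ⊕ Fin (q - 1) → (Fin 3 →₀ ℕ) := fun i =>
    match i with
    | .inl (a, b) => Finsupp.single 0 (a : ℕ) + Finsupp.single 1 (b : ℕ)
    | .inr c => Finsupp.single 2 ((c : ℕ) + 1) with hφ
  have hinj : Function.Injective φ := by
    rintro (⟨a, b⟩ | c) (⟨a', b'⟩ | c') h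
    · have h0 := DFunLike.congr_fun h (0 : Fin 3)
      have h1 := DFunLike.congr_fun h (1 : Fin 3)
      simp [hφ, Finsupp.single_apply] at h0 h1
      simp [Prod.ext_iff, Fin.ext_iff, h0, h1]
    · have h2 := DFunLike.congr_fun h (2 : Fin 3)
      simp [hφ, Finsupp.single_apply] at h2
    · have h2 := DFunLike.congr_fun h (2 : Fin 3)
      simp [hφ, Finsupp.single_apply] at h2
    · have h2 := DFunLike.congr_fun h (2 : Fin 3)
      simp [hφ, Finsupp.single_apply, Fin.ext_iff] at h2
      simp [Fin.ext_iff, h2]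
  have hstd : ∀ i, ∀ s ∈ S, ¬ s ≤ φ i := by
    rintro (⟨a, b⟩ | c) s hs hle <;>
      simp only [hS, Set.mem_insert_iff, Set.mem_singleton_iff] at hs <;>
      [ have haq := a.isLt; have hcq := c.isLt ] <;>
      [ have hbq := b.isLt; skip ] <;>
      rcases hs with rfl | rfl | rfl | rfl | rfl <;>
      [ have := Finsupp.le_def.mp hle 2; have := Finsupp.le_def.mp hle 2;
        have := Finsupp.le_def.mp hle 0; have := Finsupp.le_def.mp hle 1;
        have := Finsupp.le_def.mp hle 2;
        have := Finsupp.le_def.mp hle 0; have := Finsupp.le_def.mp hle 1;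
        have := Finsupp.le_def.mp hle 0; have := Finsupp.le_def.mp hle 1;
        have := Finsupp.le_def.mp hle 2 ] <;>
      simp [hφ, Finsupp.single_apply] at this <;> omega
  have hcover : ∀ m : Fin 3 →₀ ℕ, (∃ s ∈ S, s ≤ m) ∨ ∃ i, φ i = m := by
    intro m
    by_cases hc : m 2 = 0
    · by_cases ha : m 0 < q
      · by_cases hb : m 1 < q
        · right
          refine ⟨Sum.inl (⟨m 0, ha⟩, ⟨m 1, hb⟩), ?_⟩
          ext j
          fin_cases j <;> simp [hφ, Finsupp.single_apply] <;> omega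
        · left
          exact ⟨Finsupp.single 1 q, by simp [hS], Finsupp.le_def.mpr (by
            intro j; fin_cases j <;> simp [Finsupp.single_apply] <;> omega)⟩
      · left
        exact ⟨Finsupp.single 0 q, by simp [hS], Finsupp.le_def.mpr (by
          intro j; fin_cases j <;> simp [Finsupp.single_apply] <;> omega)⟩
    · by_cases ha : m 0 = 0
      · by_cases hb : m 1 = 0
        · by_cases hcq : m 2 < q
          · right
            refine ⟨Sum.inr ⟨m 2 - 1, by omega⟩, ?_⟩
            ext j
            fin_cases j <;> simp [hφ, Finsupp.single_apply] <;> omega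
          · left
            exact ⟨Finsupp.single 2 q, by simp [hS], Finsupp.le_def.mpr (by
              intro j; fin_cases j <;> simp [Finsupp.single_apply] <;> omega)⟩
        · left
          exact ⟨Finsupp.single 1 1 + Finsupp.single 2 1, by simp [hS],
            Finsupp.le_def.mpr (by
              intro j; fin_cases j <;> simp [Finsupp.single_apply] <;> omega)⟩
      · left
        exact ⟨Finsupp.single 0 1 + Finsupp.single 2 1, by simp [hS],
          Finsupp.le_def.mpr (by
            intro j; fin_cases j <;> simp [Finsupp.single_apply] <;> omega)⟩
  obtain ⟨B⟩ := quot_monomial_basis (k := ZMod p) S φ hinj hstd hcover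
  rw [Module.finrank_eq_card_basis B]
  have hcard : Fintype.card ((Fin q × Fin q) ⊕ Fin (q - 1)) = q * q + (q - 1) := by
    simp
  rw [hcard]
  have h3 : p ^ (2 * e) = q * q := by rw [two_mul, pow_add]
  omega
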